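/- Let n ≥ 1, let f_0, …, f_n be n+1 polynomials in ℚ[x_0, …, x_{n-1}], let C be their Dixon cancellation matrix, and let d : {0,…,n-1} → ℕ satisfy d_k ≥ 1 and the degree of every f_j in x_k is at most d_k. Suppose θ ∈ ℚ[x_0,…,x_{n-1}, x̄_0,…,x̄_{n-1}] satisfies θ · ∏_{k=0}^{n-1}(x_k − x̄_k) = det C. Then the number of distinct exponent vectors in the unbarred variables x_0,…,x_{n-1} occurring among the monomials in the support of θ (i.e., the cardinality of the image of the support of θ under restriction of exponent vectors to the unbarred variables) is at most ∏_{k=0}^{n-1} (k+1)·d_k = n! · ∏_{k=0}^{n-1} d_k. (This is the bound on the number of rows of the Dixon matrix.) -/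

import Mathlib

open MvPolynomial

/-- The `i`-th Dixon substitution homomorphism `φ_i : ℚ[x] → ℚ[x, x̄]`,
sending `x_k ↦ x̄_k` for `k < i` and `x_k ↦ x_k` for `k ≥ i`.
Here `Sum.inl k` is the unbarred variable `x_k` and `Sum.inr k` is the barred `x̄_k`. -/
noncomputable def dixonPhi (n : ℕ) (i : Fin (n + 1)) :
    MvPolynomial (Fin n) ℚ →ₐ[ℚ] MvPolynomial (Fin n ⊕ Fin n) ℚ :=
  aeval (fun k : Fin n => if (k : ℕ) < (i : ℕ) then X (Sum.inr k) else X (Sum.inl k))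

/-- The Dixon cancellation matrix of `f_0, …, f_n`, with entries `C i j = φ_i (f j)`. -/
noncomputable def dixonCancellationMatrix (n : ℕ)
    (f : Fin (n + 1) → MvPolynomial (Fin n) ℚ) :
    Matrix (Fin (n + 1)) (Fin (n + 1)) (MvPolynomial (Fin n ⊕ Fin n) ℚ) :=
  fun i j => dixonPhi n i (f j)


lemma degreeOf_eq_zero_of_not_mem_vars {σ R} [CommSemiring R] {p : MvPolynomial σ R}
    {i : σ} (h : i ∉ p.vars) : degreeOf i p = 0 :=
  Nat.le_zero.mp (degreeOf_le_iff.mpr fun m hm =>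
    le_of_eq (mem_support_notMem_vars_zero hm h))

lemma degreeOf_mul_eq_fin {R} [CommRing R] [IsDomain R] {m : ℕ}
    (p q : MvPolynomial (Fin (m+1)) R) (hp : p ≠ 0) (hq : q ≠ 0) :
    degreeOf 0 (p * q) = degreeOf 0 p + degreeOf 0 q := by
  have hp' : finSuccEquiv R m p ≠ 0 := by simpa using hp
  have hq' : finSuccEquiv R m q ≠ 0 := by simpa using hq
  rw [← natDegree_finSuccEquiv, ← natDegree_finSuccEquiv, ← natDegree_finSuccEquiv,
    map_mul, Polynomial.natDegree_mul hp' hq']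

lemma degreeOf_mul_eq_dom {σ R} [Fintype σ] [DecidableEq σ] [CommRing R] [IsDomain R]
    (i : σ) (p q : MvPolynomial σ R) (hp : p ≠ 0) (hq : q ≠ 0) :
    degreeOf i (p * q) = degreeOf i p + degreeOf i q := by
  have hcard : Fintype.card σ = (Fintype.card σ - 1) + 1 := by
    have : 0 < Fintype.card σ := Fintype.card_pos_iff.mpr ⟨i⟩
    omega
  set m := Fintype.card σ - 1 with hm
  let e0 : σ ≃ Fin (m + 1) := (Fintype.equivFin σ).trans (finCongr hcard)
  let e : σ ≃ Fin (m + 1) := e0.trans (Equiv.swap (e0 i) 0)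
  have he : e i = 0 := by simp [e, Equiv.swap_apply_left]
  have hre : ∀ r : MvPolynomial σ R, degreeOf i r = degreeOf 0 (rename e r) := by
    intro r
    rw [← degreeOf_rename_of_injective e.injective i, he]
  rw [hre, hre, hre, map_mul,
    degreeOf_mul_eq_fin _ _ (fun h0 => hp ((rename_injective _ e.injective).eq_iff' (map_zero _) |>.mp h0))
      (fun h0 => hq ((rename_injective _ e.injective).eq_iff' (map_zero _) |>.mp h0))]

lemma degreeOf_prod_eq_dom {σ R ι} [Fintype σ] [DecidableEq σ] [CommRing R] [IsDomain R]
    (i : σ) (s : Finset ι) (g : ι → MvPolynomial σ R) (h : ∀ j ∈ s, g j ≠ 0) :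
    degreeOf i (∏ j ∈ s, g j) = ∑ j ∈ s, degreeOf i (g j) := by
  induction s using Finset.cons_induction with
  | empty => simp [degreeOf_def]
  | cons a s ha ih =>
    rw [Finset.prod_cons, Finset.sum_cons,
      degreeOf_mul_eq_dom i _ _ (h a (Finset.mem_cons_self a s))
        (Finset.prod_ne_zero_iff.mpr fun j hj => h j (Finset.mem_cons_of_mem hj)),
      ih fun j hj => h j (Finset.mem_cons_of_mem hj)]

/-- The renaming underlying `dixonPhi`. -/
def dixonRho (n : ℕ) (i : Fin (n + 1)) (k : Fin n) : Fin n ⊕ Fin n :=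
  if (k : ℕ) < (i : ℕ) then Sum.inr k else Sum.inl k

lemma dixonRho_injective (n : ℕ) (i : Fin (n + 1)) : Function.Injective (dixonRho n i) := by
  intro a b hab
  unfold dixonRho at hab
  split_ifs at hab <;> simp_all


lemma dixonPhi_eq_rename (n : ℕ) (i : Fin (n + 1)) (p : MvPolynomial (Fin n) ℚ) :
    dixonPhi n i p = rename (dixonRho n i) p := by
  have hfun : (X ∘ dixonRho n i : Fin n → MvPolynomial (Fin n ⊕ Fin n) ℚ) =
      fun k : Fin n => if (k : ℕ) < (i : ℕ) then X (Sum.inr k) else X (Sum.inl k) := by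
    funext k
    simp only [Function.comp_apply, dixonRho, apply_ite X]
  rw [rename_eq_aeval, dixonPhi, hfun]

lemma degreeOf_dixonPhi_le (n : ℕ) (i : Fin (n + 1)) (k : Fin n)
    (p : MvPolynomial (Fin n) ℚ) (dk : ℕ) (hp : degreeOf k p ≤ dk) :
    degreeOf (Sum.inl k) (dixonPhi n i p) ≤ if (i : ℕ) ≤ (k : ℕ) then dk else 0 := by
  rw [dixonPhi_eq_rename]
  split_ifs with h
  · have hk : dixonRho n i k = Sum.inl k := if_neg (by omega)
    rw [← hk, degreeOf_rename_of_injective (dixonRho_injective n i)]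
    exact hp
  · refine Nat.le_zero.mpr ?_
    have hv : Sum.inl k ∉ (rename (dixonRho n i) p).vars := by
      intro hmem
      obtain ⟨m, _, hm⟩ := mem_vars_rename _ _ hmem
      unfold dixonRho at hm
      rcases lt_or_ge (m : ℕ) (i : ℕ) with h' | h'
      · rw [if_pos h'] at hm
        simp at hm
      · rw [if_neg (by omega)] at hm
        cases Sum.inl.inj hm
        omega
    exact Nat.le_zero.mp (degreeOf_le_iff.mpr fun m hm =>
      le_of_eq (mem_support_notMem_vars_zero hm hv))

lemma dixon_factor_ne_zero {n : ℕ} (l : Fin n) :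
    (X (Sum.inl l) - X (Sum.inr l) : MvPolynomial (Fin n ⊕ Fin n) ℚ) ≠ 0 := by
  intro h
  have := X_injective (sub_eq_zero.mp h)
  simp at this

lemma degreeOf_dixon_factor {n : ℕ} (k l : Fin n) :
    degreeOf (Sum.inl k) (X (Sum.inl l) - X (Sum.inr l) : MvPolynomial (Fin n ⊕ Fin n) ℚ) =
      if k = l then 1 else 0 := by
  split_ifs with h
  · subst h
    refine le_antisymm ?_ ?_
    · refine (degreeOf_sub_le _ _ _).trans ?_
      rw [degreeOf_X, degreeOf_X]
      simp
    · have hmem : (Finsupp.single (Sum.inl k) 1 : (Fin n ⊕ Fin n) →₀ ℕ) ∈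
          (X (Sum.inl k) - X (Sum.inr k) : MvPolynomial (Fin n ⊕ Fin n) ℚ).support := by
        rw [mem_support_iff, coeff_sub, coeff_X', coeff_X']
        simp [Finsupp.single_eq_single_iff]
      have := monomial_le_degreeOf (Sum.inl k) hmem
      simpa using this
  · refine Nat.le_zero.mp ((degreeOf_sub_le _ _ _).trans ?_)
    rw [degreeOf_X, degreeOf_X]
    simp [h]

lemma sum_fin_ite_eq {n : ℕ} (k : Fin n) (c : ℕ) :
    ∑ r : Fin (n + 1), (if (r : ℕ) ≤ (k : ℕ) then c else 0) = ((k : ℕ) + 1) * c := by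
  rw [Fin.sum_univ_eq_sum_range (fun j => if j ≤ (k : ℕ) then c else 0) (n + 1)]
  have hk : (k : ℕ) + 1 ≤ n + 1 := by omega
  rw [← Finset.sum_subset (Finset.range_subset_range.mpr hk)
      (fun x _ hx => if_neg (by simp only [Finset.mem_range] at hx ⊢; omega))]
  rw [Finset.sum_congr rfl (fun x hx => if_pos (by simp only [Finset.mem_range] at hx; omega))]
  simp [mul_comm]

lemma degreeOf_dixon_det_le {n : ℕ} (f : Fin (n + 1) → MvPolynomial (Fin n) ℚ)
    (d : Fin n → ℕ) (hd : ∀ j : Fin (n + 1), ∀ k : Fin n, degreeOf k (f j) ≤ d k) (k : Fin n) :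
    degreeOf (Sum.inl k) (dixonCancellationMatrix n f).det ≤ ((k : ℕ) + 1) * d k := by
  rw [Matrix.det_apply']
  refine (degreeOf_sum_le _ _ _).trans (Finset.sup_le fun σ _ => ?_)
  have hC : ((Equiv.Perm.sign σ : ℤ) : MvPolynomial (Fin n ⊕ Fin n) ℚ) =
      C (((Equiv.Perm.sign σ : ℤ) : ℚ)) := (map_intCast (C : ℚ →+* _) _).symm
  rw [hC]
  refine (degreeOf_C_mul_le _ _ _).trans ?_
  refine (degreeOf_prod_le _ _ _).trans ?_
  calc ∑ i, degreeOf (Sum.inl k) (dixonCancellationMatrix n f (σ i) i)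
      ≤ ∑ i, (if ((σ i : Fin (n+1)) : ℕ) ≤ (k : ℕ) then d k else 0) :=
        Finset.sum_le_sum fun i _ =>
          (by
            rw [show dixonCancellationMatrix n f (σ i) i = dixonPhi n (σ i) (f i) from rfl]
            exact degreeOf_dixonPhi_le n (σ i) k (f i) (d k) (hd i k))
    _ = ∑ r : Fin (n + 1), (if (r : ℕ) ≤ (k : ℕ) then d k else 0) :=
        Equiv.sum_comp σ (fun r => if (r : ℕ) ≤ (k : ℕ) then d k else 0)
    _ = ((k : ℕ) + 1) * d k := sum_fin_ite_eq k (d k)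

/-- Bound on the number of rows of the Dixon matrix: the number of distinct
exponent vectors in the unbarred variables occurring in the support of the
Dixon polynomial `θ` is at most `n! · ∏_k d_k` (`= ∏_k (k+1)·d_k`). -/
theorem dixon_poly_unbarred_monomials_card_le (n : ℕ) (hn : 1 ≤ n)
    (f : Fin (n + 1) → MvPolynomial (Fin n) ℚ) (d : Fin n → ℕ)
    (hd1 : ∀ k : Fin n, 1 ≤ d k)
    (hd : ∀ j : Fin (n + 1), ∀ k : Fin n, degreeOf k (f j) ≤ d k)
    (θ : MvPolynomial (Fin n ⊕ Fin n) ℚ)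
    (hθ : θ * ∏ k : Fin n, (X (Sum.inl k) - X (Sum.inr k)) =
        (dixonCancellationMatrix n f).det) :
    (θ.support.image fun m : (Fin n ⊕ Fin n) →₀ ℕ =>
        Finsupp.comapDomain Sum.inl m Sum.inl_injective.injOn).card ≤
      n.factorial * ∏ k : Fin n, d k := by
  classical
  by_cases hθ0 : θ = 0
  · simp [hθ0]
  set P : MvPolynomial (Fin n ⊕ Fin n) ℚ :=
    ∏ k : Fin n, (X (Sum.inl k) - X (Sum.inr k)) with hPdef
  have hPne : P ≠ 0 :=
    Finset.prod_ne_zero_iff.mpr fun l _ => dixon_factor_ne_zero l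
  have hP1 : ∀ k : Fin n, degreeOf (Sum.inl k) P = 1 := by
    intro k
    rw [hPdef, degreeOf_prod_eq_dom (Sum.inl k) _ _ fun l _ => dixon_factor_ne_zero l]
    rw [Finset.sum_congr rfl fun l _ => degreeOf_dixon_factor k l]
    simp
  have hbound : ∀ m ∈ θ.support, ∀ k : Fin n, m (Sum.inl k) + 1 ≤ ((k : ℕ) + 1) * d k := by
    intro m hm k
    have h1 : m (Sum.inl k) ≤ degreeOf (Sum.inl k) θ := monomial_le_degreeOf _ hm
    have h2 : degreeOf (Sum.inl k) θ + 1 ≤ ((k : ℕ) + 1) * d k := by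
      have heq := degreeOf_mul_eq_dom (Sum.inl k) θ P hθ0 hPne
      rw [hθ, hP1 k] at heq
      rw [← heq]
      exact degreeOf_dixon_det_le f d hd k
    omega
  have hcard : (n.factorial * ∏ k : Fin n, d k) =
      (Fintype.piFinset fun k : Fin n => Finset.range (((k : ℕ) + 1) * d k)).card := by
    rw [Fintype.card_piFinset]
    simp only [Finset.card_range]
    rw [Finset.prod_mul_distrib]
    congr 1
    rw [Fin.prod_univ_eq_prod_range (fun i => i + 1) n,
      Finset.prod_range_add_one_eq_factorial]
  rw [hcard]
  refine Finset.card_le_card_of_injOn (fun μ => (μ : Fin n → ℕ)) ?_ ?_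
  · intro μ hμ
    simp only [Finset.mem_coe, Finset.mem_image] at hμ
    obtain ⟨m, hm, rfl⟩ := hμ
    rw [Finset.mem_coe, Fintype.mem_piFinset]
    intro k
    simp only [Finset.mem_range, Finsupp.comapDomain_apply]
    have := hbound m hm k
    omega
  · intro a _ b _ hab
    exact DFunLike.coe_injective hab
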